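/- Let d ≥ 2 be a natural number, n = d², and p₀,…,p_{n-1} be nonnegative reals summing to 1 with each pᵢ > 0. Let F = max_i pᵢ and let β be the product of pᵢ^{pᵢ} over all indices except one attaining the maximum. If -∑ pᵢ·log₂pᵢ - log₂d < 0, then F^F · d · β > 1. -/

import Mathlib

theorem genbell_negative_cvne_implies
    (d : ℕ) (hd : 2 ≤ d) (p : Fin (d ^ 2) → ℝ)
    (hpos : ∀ i, 0 < p i) (hsum : ∑ i, p i = 1)
    (i₀ : Fin (d ^ 2)) (hmax : ∀ i, p i ≤ p i₀)
    (hS : -∑ i, p i * Real.logb 2 (p i) - Real.logb 2 (d : ℝ) < 0) :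
    (p i₀) ^ (p i₀) * (d : ℝ) * (∏ i ∈ Finset.univ.erase i₀, (p i) ^ (p i)) > 1 := by
  have hd0 : (0:ℝ) < d := by positivity
  have hQpos : 0 < ∏ i, p i ^ p i :=
    Finset.prod_pos fun i _ => Real.rpow_pos_of_pos (hpos i) _
  have hlog : Real.logb 2 (∏ i, p i ^ p i) = ∑ i, p i * Real.logb 2 (p i) := by
    rw [Real.logb, Real.log_prod
      (fun i _ => ne_of_gt (Real.rpow_pos_of_pos (hpos i) _)), Finset.sum_div]
    exact Finset.sum_congr rfl fun i _ => by
      rw [Real.log_rpow (hpos i), Real.logb, mul_div_assoc]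
  have h1 : Real.logb 2 ((d:ℝ)⁻¹) < Real.logb 2 (∏ i, p i ^ p i) := by
    rw [hlog, Real.logb_inv]; linarith
  have h2 : (d:ℝ)⁻¹ < ∏ i, p i ^ p i :=
    (Real.logb_lt_logb_iff (by norm_num) (by positivity) hQpos).mp h1
  have hprod : p i₀ ^ p i₀ * ∏ i ∈ Finset.univ.erase i₀, p i ^ p i
      = ∏ i, p i ^ p i :=
    Finset.mul_prod_erase _ (fun i => p i ^ p i) (Finset.mem_univ i₀)
  calc (1:ℝ) = d * (d:ℝ)⁻¹ := by field_simp
    _ < d * ∏ i, p i ^ p i := by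
        exact (mul_lt_mul_iff_right₀ hd0).mpr h2
    _ = p i₀ ^ p i₀ * d * ∏ i ∈ Finset.univ.erase i₀, p i ^ p i := by
        rw [mul_comm _ (d:ℝ), mul_assoc, hprod]
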